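/- Consider the dynamic programming table T for two agents defined by: T(0, w_1, w_2, h_1, h_2) = 1 iff (w_1,w_2,h_1,h_2) = (0,0,0,0), and T(t, w_1, w_2, h_1, h_2) = 1 iff one of: (C1a) h_1 = v_1(g_t) and T(t-1, w_1 - v_1(g_t), w_2, h', h_2) = 1 for some h' <= h_1; (C1b) h_1 > v_1(g_t) and T(t-1, w_1 - v_1(g_t), w_2, h_1, h_2) = 1; (C2a) h_2 = v_2(g_t) and T(t-1, w_1, w_2 - v_2(g_t), h_1, h') = 1 for some h' <= h_2; (C2b) h_2 > v_2(g_t) and T(t-1, w_1, w_2 - v_2(g_t), h_1, h_2) = 1. Then T(t, w_1, w_2, h_1, h_2) = 1 if and only if there exists an allocation A = (A_1, A_2) of the first t goods with v_i(A_i) = w_i and max_{g in A_i} v_i(g) = h_i for i in {1, 2} (with the max taken to be 0 on the empty set). -/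
import Mathlib


open Finset

/-- The dynamic-programming table for two agents: `Tbl m v₁ v₂ t w₁ w₂ h₁ h₂`
records whether there is an allocation of the first `t` goods in which agent
`i` has total value `wᵢ` and maximum single-good value `hᵢ`.  The subtractions
`wᵢ - vᵢ(g_t)` are guarded (`vᵢ(g_t) ≤ wᵢ`) so that they are genuine integer
subtractions. -/
def Tbl (m : ℕ) (v₁ v₂ : Fin m → ℕ) : ℕ → ℕ → ℕ → ℕ → ℕ → Prop
  | 0, w₁, w₂, h₁, h₂ => w₁ = 0 ∧ w₂ = 0 ∧ h₁ = 0 ∧ h₂ = 0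
  | t + 1, w₁, w₂, h₁, h₂ =>
      ∃ ht : t < m,
        -- (C1a)
        (h₁ = v₁ ⟨t, ht⟩ ∧ v₁ ⟨t, ht⟩ ≤ w₁ ∧
          ∃ h' ≤ h₁, Tbl m v₁ v₂ t (w₁ - v₁ ⟨t, ht⟩) w₂ h' h₂) ∨
        -- (C1b)
        (h₁ > v₁ ⟨t, ht⟩ ∧ v₁ ⟨t, ht⟩ ≤ w₁ ∧
          Tbl m v₁ v₂ t (w₁ - v₁ ⟨t, ht⟩) w₂ h₁ h₂) ∨
        -- (C2a)
        (h₂ = v₂ ⟨t, ht⟩ ∧ v₂ ⟨t, ht⟩ ≤ w₂ ∧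
          ∃ h' ≤ h₂, Tbl m v₁ v₂ t w₁ (w₂ - v₂ ⟨t, ht⟩) h₁ h') ∨
        -- (C2b)
        (h₂ > v₂ ⟨t, ht⟩ ∧ v₂ ⟨t, ht⟩ ≤ w₂ ∧
          Tbl m v₁ v₂ t w₁ (w₂ - v₂ ⟨t, ht⟩) h₁ h₂)

lemma filter_lt_succ (m t : ℕ) (ht : t < m) :
    (Finset.univ.filter (fun g : Fin m => (g : ℕ) < t + 1)) =
      insert ⟨t, ht⟩ (Finset.univ.filter (fun g : Fin m => (g : ℕ) < t)) := by
  ext g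
  simp only [mem_filter, mem_univ, true_and, mem_insert, Fin.ext_iff]
  omega

lemma notMem_filter_lt (m t : ℕ) (ht : t < m) :
    (⟨t, ht⟩ : Fin m) ∉ (Finset.univ.filter (fun g : Fin m => (g : ℕ) < t)) := by
  simp

/-- the table is filled in correctly: `Tbl m v₁ v₂ t w₁ w₂ h₁ h₂`
holds iff there is an allocation `(A₁, A₂)` of the first `t` goods with
`vᵢ(Aᵢ) = wᵢ` and `max_{g ∈ Aᵢ} vᵢ(g) = hᵢ` (the max being `0` on `∅`). -/
theorem stmt15 (m : ℕ) (v₁ v₂ : Fin m → ℕ)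
    (hv : ∀ g, 0 < v₁ g ∧ 0 < v₂ g)
    (t : ℕ) (ht : t ≤ m) (w₁ w₂ h₁ h₂ : ℕ) :
    Tbl m v₁ v₂ t w₁ w₂ h₁ h₂ ↔
      ∃ A₁ A₂ : Finset (Fin m),
        Disjoint A₁ A₂ ∧
        A₁ ∪ A₂ = Finset.univ.filter (fun g : Fin m => (g : ℕ) < t) ∧
        ∑ g ∈ A₁, v₁ g = w₁ ∧ ∑ g ∈ A₂, v₂ g = w₂ ∧
        A₁.sup v₁ = h₁ ∧ A₂.sup v₂ = h₂ := by
  induction t generalizing w₁ w₂ h₁ h₂ with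
  | zero =>
    have hf : (Finset.univ.filter (fun g : Fin m => (g : ℕ) < 0)) = (∅ : Finset (Fin m)) := by
      simp
    simp only [Tbl, hf]
    constructor
    · rintro ⟨rfl, rfl, rfl, rfl⟩
      exact ⟨∅, ∅, by simp, by simp, by simp, by simp, by simp, by simp⟩
    · rintro ⟨A₁, A₂, hd, hu, hs1, hs2, hh1, hh2⟩
      obtain ⟨rfl, rfl⟩ := Finset.union_eq_empty.mp hu
      simp at hs1 hs2 hh1 hh2
      exact ⟨hs1.symm, hs2.symm, hh1.symm, hh2.symm⟩
  | succ t ih =>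
    have htm : t < m := ht
    have ht' : t ≤ m := le_of_lt htm
    set g₀ : Fin m := ⟨t, htm⟩ with hg₀def
    have hfilt := filter_lt_succ m t htm
    have hg₀not := notMem_filter_lt m t htm
    constructor
    · rintro ⟨htt, H⟩
      have hgeq : (⟨t, htt⟩ : Fin m) = g₀ := rfl
      rw [hgeq] at H
      rcases H with ⟨heq, hle, h', hh', hT⟩ | ⟨hgt, hle, hT⟩ | ⟨heq, hle, h', hh', hT⟩ |
        ⟨hgt, hle, hT⟩
      · obtain ⟨A₁, A₂, hd, hu, hs1, hs2, hh1, hh2⟩ := (ih ht' _ _ _ _).mp hT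
        have hgA₁ : g₀ ∉ A₁ := fun h => hg₀not (hu ▸ mem_union_left _ h)
        have hgA₂ : g₀ ∉ A₂ := fun h => hg₀not (hu ▸ mem_union_right _ h)
        refine ⟨insert g₀ A₁, A₂, ?_, ?_, ?_, hs2, ?_, hh2⟩
        · exact Finset.disjoint_insert_left.mpr ⟨hgA₂, hd⟩
        · rw [insert_union, hu, hfilt]
        · rw [Finset.sum_insert hgA₁, hs1]; omega
        · rw [Finset.sup_insert, hh1, heq]
          exact sup_eq_left.mpr (heq ▸ hh')
      · obtain ⟨A₁, A₂, hd, hu, hs1, hs2, hh1, hh2⟩ := (ih ht' _ _ _ _).mp hT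
        have hgA₁ : g₀ ∉ A₁ := fun h => hg₀not (hu ▸ mem_union_left _ h)
        have hgA₂ : g₀ ∉ A₂ := fun h => hg₀not (hu ▸ mem_union_right _ h)
        refine ⟨insert g₀ A₁, A₂, ?_, ?_, ?_, hs2, ?_, hh2⟩
        · exact Finset.disjoint_insert_left.mpr ⟨hgA₂, hd⟩
        · rw [insert_union, hu, hfilt]
        · rw [Finset.sum_insert hgA₁, hs1]; omega
        · rw [Finset.sup_insert, hh1]
          exact sup_eq_right.mpr (le_of_lt hgt)
      · obtain ⟨A₁, A₂, hd, hu, hs1, hs2, hh1, hh2⟩ := (ih ht' _ _ _ _).mp hT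
        have hgA₁ : g₀ ∉ A₁ := fun h => hg₀not (hu ▸ mem_union_left _ h)
        have hgA₂ : g₀ ∉ A₂ := fun h => hg₀not (hu ▸ mem_union_right _ h)
        refine ⟨A₁, insert g₀ A₂, ?_, ?_, hs1, ?_, hh1, ?_⟩
        · exact Finset.disjoint_insert_right.mpr ⟨hgA₁, hd⟩
        · rw [union_insert, hu, hfilt]
        · rw [Finset.sum_insert hgA₂, hs2]; omega
        · rw [Finset.sup_insert, hh2, heq]
          exact sup_eq_left.mpr (heq ▸ hh')
      · obtain ⟨A₁, A₂, hd, hu, hs1, hs2, hh1, hh2⟩ := (ih ht' _ _ _ _).mp hT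
        have hgA₁ : g₀ ∉ A₁ := fun h => hg₀not (hu ▸ mem_union_left _ h)
        have hgA₂ : g₀ ∉ A₂ := fun h => hg₀not (hu ▸ mem_union_right _ h)
        refine ⟨A₁, insert g₀ A₂, ?_, ?_, hs1, ?_, hh1, ?_⟩
        · exact Finset.disjoint_insert_right.mpr ⟨hgA₁, hd⟩
        · rw [union_insert, hu, hfilt]
        · rw [Finset.sum_insert hgA₂, hs2]; omega
        · rw [Finset.sup_insert, hh2]
          exact sup_eq_right.mpr (le_of_lt hgt)
    · rintro ⟨A₁, A₂, hd, hu, hs1, hs2, hh1, hh2⟩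
      refine ⟨htm, ?_⟩
      have hg₀mem : g₀ ∈ A₁ ∪ A₂ := by
        rw [hu, hfilt]; exact mem_insert_self _ _
      rcases Finset.mem_union.mp hg₀mem with hmem | hmem
      · -- g₀ ∈ A₁
        have hgA₂ : g₀ ∉ A₂ := Finset.disjoint_left.mp hd hmem
        set B := A₁.erase g₀ with hB
        have hins : A₁ = insert g₀ B := (Finset.insert_erase hmem).symm
        have hgB : g₀ ∉ B := Finset.notMem_erase _ _
        have hBu : B ∪ A₂ = Finset.univ.filter (fun g : Fin m => (g : ℕ) < t) := by
          have h1 : insert g₀ (B ∪ A₂) = insert g₀ (Finset.univ.filter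
              (fun g : Fin m => (g : ℕ) < t)) := by
            rw [← insert_union, ← hins, hu, hfilt]
          have h2 : g₀ ∉ B ∪ A₂ := by
            simp [hgB, hgA₂]
          have h3 := hg₀not
          ext g
          constructor
          · intro hg
            have : g ∈ insert g₀ (Finset.univ.filter (fun g : Fin m => (g : ℕ) < t)) :=
              h1 ▸ mem_insert_of_mem hg
            rcases mem_insert.mp this with rfl | h
            · exact absurd hg h2
            · exact h
          · intro hg
            have : g ∈ insert g₀ (B ∪ A₂) := h1 ▸ mem_insert_of_mem hg
            rcases mem_insert.mp this with rfl | h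
            · exact absurd hg h3
            · exact h
        have hvle : v₁ g₀ ≤ w₁ := hs1 ▸ Finset.single_le_sum (fun i _ => Nat.zero_le _) hmem
        have hsB : ∑ g ∈ B, v₁ g = w₁ - v₁ g₀ := by
          have := Finset.add_sum_erase A₁ v₁ hmem
          rw [hs1, ← hB] at this
          omega
        have hsup : h₁ = v₁ g₀ ⊔ B.sup v₁ := by
          rw [← hh1, hins, Finset.sup_insert]
        have hT : Tbl m v₁ v₂ t (w₁ - v₁ g₀) w₂ (B.sup v₁) h₂ :=
          (ih ht' _ _ _ _).mpr ⟨B, A₂, (Finset.disjoint_of_subset_left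
            (Finset.erase_subset _ _) hd), hBu, hsB, hs2, rfl, hh2⟩
        rcases le_or_gt (B.sup v₁) (v₁ g₀) with hc | hc
        · left
          have heq : h₁ = v₁ g₀ := by rw [hsup]; exact sup_eq_left.mpr hc
          exact ⟨heq, hvle, B.sup v₁, heq ▸ hc, hT⟩
        · right; left
          have heq : h₁ = B.sup v₁ := by rw [hsup]; exact sup_eq_right.mpr (le_of_lt hc)
          exact ⟨heq ▸ hc, hvle, heq ▸ hT⟩
      · -- g₀ ∈ A₂
        have hgA₁ : g₀ ∉ A₁ := Finset.disjoint_right.mp hd hmem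
        set B := A₂.erase g₀ with hB
        have hins : A₂ = insert g₀ B := (Finset.insert_erase hmem).symm
        have hgB : g₀ ∉ B := Finset.notMem_erase _ _
        have hBu : A₁ ∪ B = Finset.univ.filter (fun g : Fin m => (g : ℕ) < t) := by
          have h1 : insert g₀ (A₁ ∪ B) = insert g₀ (Finset.univ.filter
              (fun g : Fin m => (g : ℕ) < t)) := by
            rw [← union_insert, ← hins, hu, hfilt]
          have h2 : g₀ ∉ A₁ ∪ B := by
            simp [hgB, hgA₁]
          have h3 := hg₀not
          ext g
          constructor
          · intro hg
            have : g ∈ insert g₀ (Finset.univ.filter (fun g : Fin m => (g : ℕ) < t)) :=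
              h1 ▸ mem_insert_of_mem hg
            rcases mem_insert.mp this with rfl | h
            · exact absurd hg h2
            · exact h
          · intro hg
            have : g ∈ insert g₀ (A₁ ∪ B) := h1 ▸ mem_insert_of_mem hg
            rcases mem_insert.mp this with rfl | h
            · exact absurd hg h3
            · exact h
        have hvle : v₂ g₀ ≤ w₂ := hs2 ▸ Finset.single_le_sum (fun i _ => Nat.zero_le _) hmem
        have hsB : ∑ g ∈ B, v₂ g = w₂ - v₂ g₀ := by
          have := Finset.add_sum_erase A₂ v₂ hmem
          rw [hs2, ← hB] at this
          omega
        have hsup : h₂ = v₂ g₀ ⊔ B.sup v₂ := by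
          rw [← hh2, hins, Finset.sup_insert]
        have hT : Tbl m v₁ v₂ t w₁ (w₂ - v₂ g₀) h₁ (B.sup v₂) :=
          (ih ht' _ _ _ _).mpr ⟨A₁, B, (Finset.disjoint_of_subset_right
            (Finset.erase_subset _ _) hd), hBu, hs1, hsB, hh1, rfl⟩
        rcases le_or_gt (B.sup v₂) (v₂ g₀) with hc | hc
        · right; right; left
          have heq : h₂ = v₂ g₀ := by rw [hsup]; exact sup_eq_left.mpr hc
          exact ⟨heq, hvle, B.sup v₂, heq ▸ hc, hT⟩
        · right; right; right
          have heq : h₂ = B.sup v₂ := by rw [hsup]; exact sup_eq_right.mpr (le_of_lt hc)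
          exact ⟨heq ▸ hc, hvle, heq ▸ hT⟩
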